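/- arXiv:1309.5003 — 3 statements merged into one kernel-verified Lean document; each statement's English description precedes it below -/
import Mathlib

section
/- Let p be a probability density on ℝ^d belonging to the Hölder class H₂^(α)(K), i.e., the L₂-norm of p(·−h) − p(·) is at most K|h|^α for all |h| ≤ 1. For independent random vectors X, Y with densities p_X, p_Y ∈ H₂^(α)(K) ∩ L₂(ℝ^d), the quantity q̃_{1,1,ε} := b_ε(d)^{-1} P(|X−Y| ≤ ε) satisfies |q̃_{1,1,ε} − ∫ p_X p_Y| ≤ (1/2) K² ε^{2α} for all 0 < ε ≤ 1. -/
open MeasureTheory ProbabilityTheory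
open scoped ENNReal

variable {d : ℕ}


lemma integrable_mul_of_memL2 {f g : EuclideanSpace ℝ (Fin d) → ℝ}
    (hf : MemLp f 2 volume) (hg : MemLp g 2 volume) :
    Integrable (fun x => f x * g x) volume := by
  have h1 : (1 : ℝ≥0∞)/1 = 1/2 + 1/2 := by rw [div_one]; exact (ENNReal.add_halves 1).symm
  have : MemLp (f • g) 1 volume := hg.smul hf
  rw [memLp_one_iff_integrable] at this
  simpa [Pi.smul_apply', smul_eq_mul, Pi.mul_def] using this

lemma memL2_translate {f : EuclideanSpace ℝ (Fin d) → ℝ}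
    (hf : MemLp f 2 volume) (h : EuclideanSpace ℝ (Fin d)) :
    MemLp (fun y => f (h + y)) 2 volume :=
  hf.comp_measurePreserving (measurePreserving_add_left volume h)


lemma prod_density_ball (qX qY : EuclideanSpace ℝ (Fin d) → ℝ)
    (hqX : Measurable qX) (hqY : Measurable qY) (ε : ℝ) :
    ((volume.withDensity fun x => ENNReal.ofReal (qX x)).prod
      (volume.withDensity fun y => ENNReal.ofReal (qY y)))
        {p : EuclideanSpace ℝ (Fin d) × EuclideanSpace ℝ (Fin d) | dist p.1 p.2 ≤ ε}
    = ∫⁻ h in Metric.closedBall (0 : EuclideanSpace ℝ (Fin d)) ε,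
        ∫⁻ y, ENNReal.ofReal (qX (h + y)) * ENNReal.ofReal (qY y) := by
  set gX : EuclideanSpace ℝ (Fin d) → ℝ≥0∞ := fun x => ENNReal.ofReal (qX x) with hgX_def
  set gY : EuclideanSpace ℝ (Fin d) → ℝ≥0∞ := fun y => ENNReal.ofReal (qY y) with hgY_def
  have hgX : Measurable gX := hqX.ennreal_ofReal
  have hgY : Measurable gY := hqY.ennreal_ofReal
  set S : Set (EuclideanSpace ℝ (Fin d) × EuclideanSpace ℝ (Fin d)) :=
    {p | dist p.1 p.2 ≤ ε} with hS_def
  have hS : MeasurableSet S := measurableSet_le measurable_dist measurable_const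
  set F : EuclideanSpace ℝ (Fin d) × EuclideanSpace ℝ (Fin d) → ℝ≥0∞ :=
    fun p => S.indicator (fun _ => 1) p * (gX p.1 * gY p.2) with hF_def
  have hF : Measurable F :=
    ((measurable_one.indicator hS)).mul ((hgX.comp measurable_fst).mul (hgY.comp measurable_snd))
  have hG : Measurable (fun p : EuclideanSpace ℝ (Fin d) × EuclideanSpace ℝ (Fin d) =>
      S.indicator (fun _ => (1:ℝ≥0∞)) p * gY p.2) :=
    (measurable_one.indicator hS).mul (hgY.comp measurable_snd)
  have step1 : ((volume.withDensity gX).prod (volume.withDensity gY)) S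
      = ∫⁻ p, F p ∂((volume : Measure (EuclideanSpace ℝ (Fin d))).prod volume) := by
    rw [Measure.prod_apply hS]
    have h1 : ∀ x, (volume.withDensity gY) (Prod.mk x ⁻¹' S)
        = ∫⁻ y, S.indicator (fun _ => (1:ℝ≥0∞)) (x, y) * gY y := by
      intro x
      rw [withDensity_apply _ (measurable_prodMk_left hS),
        ← lintegral_indicator (measurable_prodMk_left hS)]
      refine lintegral_congr fun y => ?_
      by_cases hmem : (x, y) ∈ S
      · simp [Set.indicator_of_mem, hmem, Set.indicator_of_mem (Set.mem_preimage.mpr hmem)]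
      · simp [Set.indicator_of_notMem, hmem, Set.indicator_of_notMem (fun hc => hmem hc)]
    calc ∫⁻ x, (volume.withDensity gY) (Prod.mk x ⁻¹' S) ∂(volume.withDensity gX)
        = ∫⁻ x, (∫⁻ y, S.indicator (fun _ => (1:ℝ≥0∞)) (x, y) * gY y) ∂(volume.withDensity gX) := by
          exact lintegral_congr h1
      _ = ∫⁻ x, gX x * ∫⁻ y, S.indicator (fun _ => (1:ℝ≥0∞)) (x, y) * gY y ∂volume := by
          exact lintegral_withDensity_eq_lintegral_mul volume hgX hG.lintegral_prod_right'
      _ = ∫⁻ x, ∫⁻ y, F (x, y) ∂volume := by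
          refine lintegral_congr fun x => ?_
          have hmeas : Measurable fun y => S.indicator (fun _ => (1:ℝ≥0∞)) (x, y) * gY y :=
            hG.comp measurable_prodMk_left
          rw [← lintegral_const_mul (gX x) hmeas]
          refine lintegral_congr fun y => ?_
          simp only [hF_def]
          ring
      _ = ∫⁻ p, F p ∂((volume : Measure (EuclideanSpace ℝ (Fin d))).prod volume) :=
          (lintegral_prod F hF.aemeasurable).symm
  rw [step1]
  have hT : MeasurePreserving
      (fun z : EuclideanSpace ℝ (Fin d) × EuclideanSpace ℝ (Fin d) => (z.1 + z.2, z.2))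
      (((volume : Measure (EuclideanSpace ℝ (Fin d))).prod volume))
      (((volume : Measure (EuclideanSpace ℝ (Fin d))).prod volume)) :=
    measurePreserving_add_prod volume volume
  rw [← hT.lintegral_comp hF]
  have hpt : ∀ z : EuclideanSpace ℝ (Fin d) × EuclideanSpace ℝ (Fin d),
      F (z.1 + z.2, z.2) = (Metric.closedBall (0 : EuclideanSpace ℝ (Fin d)) ε).indicator
        (fun _ => (1:ℝ≥0∞)) z.1 * (gX (z.1 + z.2) * gY z.2) := by
    intro z
    have hmem : ((z.1 + z.2, z.2) ∈ S) ↔ z.1 ∈ Metric.closedBall (0 : EuclideanSpace ℝ (Fin d)) ε := by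
      simp only [hS_def, Set.mem_setOf_eq, Metric.mem_closedBall, dist_zero_right]
      rw [dist_add_self_left]
    by_cases hz : z.1 ∈ Metric.closedBall (0 : EuclideanSpace ℝ (Fin d)) ε
    · simp [hF_def, Set.indicator_of_mem, hz, Set.indicator_of_mem (hmem.mpr hz)]
    · simp [hF_def, Set.indicator_of_notMem, hz,
        Set.indicator_of_notMem (fun hc => hz (hmem.mp hc))]
  calc ∫⁻ z, F (z.1 + z.2, z.2) ∂((volume : Measure (EuclideanSpace ℝ (Fin d))).prod volume)
      = ∫⁻ z, (Metric.closedBall (0 : EuclideanSpace ℝ (Fin d)) ε).indicator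
          (fun _ => (1:ℝ≥0∞)) z.1 * (gX (z.1 + z.2) * gY z.2)
          ∂((volume : Measure (EuclideanSpace ℝ (Fin d))).prod volume) :=
        lintegral_congr hpt
    _ = ∫⁻ h, (Metric.closedBall (0 : EuclideanSpace ℝ (Fin d)) ε).indicator
          (fun _ => (1:ℝ≥0∞)) h * ∫⁻ y, gX (h + y) * gY y := by
        rw [lintegral_prod]
        · refine lintegral_congr fun h => ?_
          have hmeas : Measurable fun y => gX (h + y) * gY y :=
            (hgX.comp (measurable_const_add h)).mul hgY
          show ∫⁻ y, (Metric.closedBall (0 : EuclideanSpace ℝ (Fin d)) ε).indicator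
              (fun _ => (1:ℝ≥0∞)) h * (gX (h + y) * gY y) = _
          exact lintegral_const_mul _ hmeas
        · exact ((measurable_one.indicator measurableSet_closedBall).comp measurable_fst).aemeasurable.mul
            (((hgX.comp ((measurable_fst.add measurable_snd))).mul (hgY.comp measurable_snd)).aemeasurable)
    _ = ∫⁻ h, (Metric.closedBall (0 : EuclideanSpace ℝ (Fin d)) ε).indicator
          (fun h => ∫⁻ y, gX (h + y) * gY y) h := by
        refine lintegral_congr fun h => ?_
        by_cases hz : h ∈ Metric.closedBall (0 : EuclideanSpace ℝ (Fin d)) ε <;>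
          simp [Set.indicator_of_mem, Set.indicator_of_notMem, hz]
    _ = ∫⁻ h in Metric.closedBall (0 : EuclideanSpace ℝ (Fin d)) ε,
          ∫⁻ y, gX (h + y) * gY y := lintegral_indicator measurableSet_closedBall _

lemma abs_integral_mul_le_sqrt {f g : EuclideanSpace ℝ (Fin d) → ℝ}
    (hf : MemLp f 2 volume) (hg : MemLp g 2 volume) :
    |∫ x, f x * g x| ≤ Real.sqrt (∫ x, f x ^ 2) * Real.sqrt (∫ x, g x ^ 2) := by
  have hpq : Real.HolderConjugate 2 2 := Real.HolderConjugate.two_two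
  have hf' : MemLp f (ENNReal.ofReal 2) volume := by rwa [ENNReal.ofReal_ofNat]
  have hg' : MemLp g (ENNReal.ofReal 2) volume := by rwa [ENNReal.ofReal_ofNat]
  have h1 : |∫ x, f x * g x| ≤ ∫ x, ‖f x‖ * ‖g x‖ := by
    calc |∫ x, f x * g x| = ‖∫ x, f x * g x‖ := (Real.norm_eq_abs _).symm
      _ ≤ ∫ x, ‖f x * g x‖ := norm_integral_le_integral_norm _
      _ = ∫ x, ‖f x‖ * ‖g x‖ :=
          integral_congr_ae (Filter.Eventually.of_forall fun x => norm_mul _ _)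
  have h2 := integral_mul_norm_le_Lp_mul_Lq hpq hf' hg'
  have e1 : ∀ (u : EuclideanSpace ℝ (Fin d) → ℝ), (fun a => ‖u a‖ ^ (2:ℝ)) = fun a => u a ^ 2 := by
    intro u; funext a
    rw [show (2:ℝ) = ((2:ℕ):ℝ) by norm_num, Real.rpow_natCast, Real.norm_eq_abs, sq_abs]
  rw [e1 f, e1 g] at h2
  refine h1.trans (h2.trans_eq ?_)
  rw [Real.sqrt_eq_rpow, Real.sqrt_eq_rpow]

lemma key_identity {qX qY : EuclideanSpace ℝ (Fin d) → ℝ}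
    (hqX2 : MemLp qX 2 volume) (hqY2 : MemLp qY 2 volume)
    (h : EuclideanSpace ℝ (Fin d)) :
    (∫ y, qX (h + y) * qY y) + (∫ y, qX (-h + y) * qY y) - 2 * (∫ y, qX y * qY y)
      = - ∫ y, (qX (h + y) - qX y) * (qY (h + y) - qY y) := by
  have tX := memL2_translate hqX2 h
  have tY := memL2_translate hqY2 h
  have i1 : Integrable (fun y => qX (h + y) * qY (h + y)) volume := integrable_mul_of_memL2 tX tY
  have i2 : Integrable (fun y => qX (h + y) * qY y) volume := integrable_mul_of_memL2 tX hqY2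
  have i3 : Integrable (fun y => qX y * qY (h + y)) volume := integrable_mul_of_memL2 hqX2 tY
  have i4 : Integrable (fun y => qX y * qY y) volume := integrable_mul_of_memL2 hqX2 hqY2
  have e1 : ∫ y, qX (h + y) * qY (h + y) = ∫ y, qX y * qY y :=
    integral_add_left_eq_self (fun y => qX y * qY y) h
  have e3 : ∫ y, qX y * qY (h + y) = ∫ y, qX (-h + y) * qY y := by
    rw [← integral_add_left_eq_self (fun y => qX (-h + y) * qY y) h]
    simp only [neg_add_cancel_left]
  have expand : (fun y => (qX (h + y) - qX y) * (qY (h + y) - qY y))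
      = fun y => qX (h + y) * qY (h + y) - qX (h + y) * qY y - qX y * qY (h + y)
          + qX y * qY y := by
    funext y; ring
  have i123 : Integrable
      (fun y => qX (h + y) * qY (h + y) - qX (h + y) * qY y - qX y * qY (h + y)) volume :=
    (i1.sub i2).sub i3
  have i12 : Integrable (fun y => qX (h + y) * qY (h + y) - qX (h + y) * qY y) volume := i1.sub i2
  rw [expand, integral_add i123 i4, integral_sub i12 i3, integral_sub i1 i2, e1, e3]
  ring

/-- For independent `X ~ p_X`, `Y ~ p_Y` with densities in the Hölder class `H₂^(α)(K)`,
the approximation `q̃_{1,1,ε} = b_ε(d)⁻¹ P(|X - Y| ≤ ε)` of `q_{1,1} = ∫ p_X p_Y`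
satisfies `|q̃_{1,1,ε} - q_{1,1}| ≤ (1/2) K² ε^(2α)` for `0 < ε ≤ 1`. -/
theorem bias_bound_q11 (d : ℕ) (hd : 1 ≤ d) (α K : ℝ) (hα : 0 < α) (hα1 : α ≤ 1) (hK : 0 < K)
    {Ω : Type*} [MeasureSpace Ω] [IsProbabilityMeasure (ℙ : Measure Ω)]
    (X Y : Ω → EuclideanSpace ℝ (Fin d)) (hX : Measurable X) (hY : Measurable Y)
    (hindep : IndepFun X Y ℙ)
    (pX pY : EuclideanSpace ℝ (Fin d) → ℝ)
    (hpX0 : ∀ x, 0 ≤ pX x) (hpY0 : ∀ x, 0 ≤ pY x)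
    (hpX2 : MeasureTheory.MemLp pX 2 volume) (hpY2 : MeasureTheory.MemLp pY 2 volume)
    (hlawX : Measure.map X ℙ = volume.withDensity (fun x => ENNReal.ofReal (pX x)))
    (hlawY : Measure.map Y ℙ = volume.withDensity (fun x => ENNReal.ofReal (pY x)))
    (hHolderX : ∀ h : EuclideanSpace ℝ (Fin d), ‖h‖ ≤ 1 →
      Real.sqrt (∫ x, (pX (x - h) - pX x) ^ 2) ≤ K * ‖h‖ ^ α)
    (hHolderY : ∀ h : EuclideanSpace ℝ (Fin d), ‖h‖ ≤ 1 →
      Real.sqrt (∫ x, (pY (x - h) - pY x) ^ 2) ≤ K * ‖h‖ ^ α)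
    (ε : ℝ) (hε : 0 < ε) (hε1 : ε ≤ 1) :
    |((volume (Metric.ball (0 : EuclideanSpace ℝ (Fin d)) ε)).toReal)⁻¹
        * (ℙ {ω | dist (X ω) (Y ω) ≤ ε}).toReal
      - ∫ x, pX x * pY x| ≤ (1 / 2) * K ^ 2 * ε ^ (2 * α) := by
  haveI : Nontrivial (EuclideanSpace ℝ (Fin d)) := by
    refine ⟨EuclideanSpace.single (⟨0, hd⟩ : Fin d) (1 : ℝ), 0, fun hc => ?_⟩
    have := congrArg (fun v : EuclideanSpace ℝ (Fin d) => v ⟨0, hd⟩) hc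
    simp [EuclideanSpace.single_apply] at this
  -- measurable nonneg versions of the densities
  set qX : EuclideanSpace ℝ (Fin d) → ℝ := fun x => max (hpX2.1.mk pX x) 0 with hqX_def
  set qY : EuclideanSpace ℝ (Fin d) → ℝ := fun x => max (hpY2.1.mk pY x) 0 with hqY_def
  have hqXm : Measurable qX := hpX2.1.stronglyMeasurable_mk.measurable.max measurable_const
  have hqYm : Measurable qY := hpY2.1.stronglyMeasurable_mk.measurable.max measurable_const
  have hqX0 : ∀ x, 0 ≤ qX x := fun x => le_max_right _ _
  have hqY0 : ∀ x, 0 ≤ qY x := fun x => le_max_right _ _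
  have heqX : pX =ᵐ[volume] qX := by
    filter_upwards [hpX2.1.ae_eq_mk] with x hx
    rw [hqX_def]; simp only [← hx, max_eq_left (hpX0 x)]
  have heqY : pY =ᵐ[volume] qY := by
    filter_upwards [hpY2.1.ae_eq_mk] with x hx
    rw [hqY_def]; simp only [← hx, max_eq_left (hpY0 x)]
  have hqX2 : MemLp qX 2 volume := hpX2.ae_eq heqX
  have hqY2 : MemLp qY 2 volume := hpY2.ae_eq heqY
  -- Hölder condition for q's
  have hHq : ∀ (q p : EuclideanSpace ℝ (Fin d) → ℝ), p =ᵐ[volume] q →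
      (∀ h : EuclideanSpace ℝ (Fin d), ‖h‖ ≤ 1 →
        Real.sqrt (∫ x, (p (x - h) - p x) ^ 2) ≤ K * ‖h‖ ^ α) →
      ∀ h : EuclideanSpace ℝ (Fin d), ‖h‖ ≤ 1 →
        Real.sqrt (∫ x, (q (x - h) - q x) ^ 2) ≤ K * ‖h‖ ^ α := by
    intro q p hpq hH h hh
    have htr : (fun x => p (x - h)) =ᵐ[volume] (fun x => q (x - h)) :=
      (measurePreserving_sub_right volume h).quasiMeasurePreserving.ae_eq_comp hpq
    have e : ∫ x, (q (x - h) - q x) ^ 2 = ∫ x, (p (x - h) - p x) ^ 2 := by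
      refine integral_congr_ae ?_
      filter_upwards [hpq, htr] with x h1 h2
      rw [← h1, ← h2]
    rw [e]; exact hH h hh
  have hHqX := hHq qX pX heqX hHolderX
  have hHqY := hHq qY pY heqY hHolderY
  -- the sets
  set S : Set (EuclideanSpace ℝ (Fin d) × EuclideanSpace ℝ (Fin d)) :=
    {p | dist p.1 p.2 ≤ ε} with hS_def
  have hS : MeasurableSet S := measurableSet_le measurable_dist measurable_const
  set B : Set (EuclideanSpace ℝ (Fin d)) := Metric.closedBall 0 ε with hB_def
  -- rewrite the probability
  have hlawX' : Measure.map X ℙ = volume.withDensity (fun x => ENNReal.ofReal (qX x)) := by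
    rw [hlawX]; exact withDensity_congr_ae (by filter_upwards [heqX] with x hx; rw [hx])
  have hlawY' : Measure.map Y ℙ = volume.withDensity (fun x => ENNReal.ofReal (qY x)) := by
    rw [hlawY]; exact withDensity_congr_ae (by filter_upwards [heqY] with x hx; rw [hx])
  have hmap : Measure.map (fun ω => (X ω, Y ω)) ℙ = (Measure.map X ℙ).prod (Measure.map Y ℙ) :=
    (indepFun_iff_map_prod_eq_prod_map_map hX.aemeasurable hY.aemeasurable).mp hindep
  have hPP : ℙ {ω | dist (X ω) (Y ω) ≤ ε}
      = ∫⁻ h in B, ∫⁻ y, ENNReal.ofReal (qX (h + y)) * ENNReal.ofReal (qY y) := by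
    have hpre : {ω | dist (X ω) (Y ω) ≤ ε} = (fun ω => (X ω, Y ω)) ⁻¹' S := rfl
    rw [hpre, ← Measure.map_apply (hX.prodMk hY) hS, hmap, hlawX', hlawY']
    exact prod_density_ball qX qY hqXm hqYm ε
  -- the function A
  set A : EuclideanSpace ℝ (Fin d) → ℝ := fun h => ∫ y, qX (h + y) * qY y with hA_def
  have hInt : ∀ h : EuclideanSpace ℝ (Fin d), Integrable (fun y => qX (h + y) * qY y) volume :=
    fun h => integrable_mul_of_memL2 (memL2_translate hqX2 h) hqY2
  have hA0 : ∀ h, 0 ≤ A h := fun h =>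
    integral_nonneg fun y => mul_nonneg (hqX0 _) (hqY0 _)
  have hL_eq : ∀ h : EuclideanSpace ℝ (Fin d),
      (∫⁻ y, ENNReal.ofReal (qX (h + y)) * ENNReal.ofReal (qY y)) = ENNReal.ofReal (A h) := by
    intro h
    calc ∫⁻ y, ENNReal.ofReal (qX (h + y)) * ENNReal.ofReal (qY y)
        = ∫⁻ y, ENNReal.ofReal (qX (h + y) * qY y) :=
          lintegral_congr fun y => (ENNReal.ofReal_mul (hqX0 _)).symm
      _ = ENNReal.ofReal (A h) := (ofReal_integral_eq_lintegral_ofReal (hInt h)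
          (Filter.Eventually.of_forall fun y => mul_nonneg (hqX0 _) (hqY0 _))).symm
  have hAmeas : Measurable A := by
    have jm : Measurable (fun p : EuclideanSpace ℝ (Fin d) × EuclideanSpace ℝ (Fin d) =>
        ENNReal.ofReal (qX (p.1 + p.2)) * ENNReal.ofReal (qY p.2)) :=
      ((hqXm.ennreal_ofReal).comp (measurable_fst.add measurable_snd)).mul
        ((hqYm.ennreal_ofReal).comp measurable_snd)
    have : A = fun h => (∫⁻ y, ENNReal.ofReal (qX (h + y)) * ENNReal.ofReal (qY y)).toReal := by
      funext h; rw [hL_eq h, ENNReal.toReal_ofReal (hA0 h)]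
    rw [this]
    exact ENNReal.measurable_toReal.comp jm.lintegral_prod_right'
  -- P.toReal = ∫ h in B, A h
  have hPT : (ℙ {ω | dist (X ω) (Y ω) ≤ ε}).toReal = ∫ h in B, A h := by
    rw [hPP]
    have : ∀ᵐ h ∂(volume.restrict B),
        (∫⁻ y, ENNReal.ofReal (qX (h + y)) * ENNReal.ofReal (qY y)) = ENNReal.ofReal (A h) :=
      Filter.Eventually.of_forall hL_eq
    rw [lintegral_congr_ae this,
      integral_eq_lintegral_of_nonneg_ae (Filter.Eventually.of_forall fun h => hA0 h)
        (hAmeas.aestronglyMeasurable.restrict)]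
  -- uniform bound on A
  set Cq : ℝ := Real.sqrt (∫ x, qX x ^ 2) * Real.sqrt (∫ x, qY x ^ 2) with hCq_def
  have hAbd : ∀ h, |A h| ≤ Cq := by
    intro h
    have := abs_integral_mul_le_sqrt (memL2_translate hqX2 h) hqY2
    have etr : ∫ y, qX (h + y) ^ 2 = ∫ x, qX x ^ 2 :=
      integral_add_left_eq_self (fun y => qX y ^ 2) h
    rw [etr] at this
    exact this
  have hBfin : volume B < ⊤ := measure_closedBall_lt_top
  have hBmeas : MeasurableSet B := measurableSet_closedBall
  have hIntA : IntegrableOn A B volume := by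
    refine Integrable.mono'
      (integrableOn_const (C := Cq) hBfin.ne)
      (hAmeas.aestronglyMeasurable.restrict) ?_
    exact Filter.Eventually.of_forall fun h => by simpa [Real.norm_eq_abs] using hAbd h
  have hIntA' : IntegrableOn (fun h => A (-h)) B volume := by
    refine Integrable.mono'
      (integrableOn_const (C := Cq) hBfin.ne)
      ((hAmeas.comp measurable_neg).aestronglyMeasurable.restrict) ?_
    exact Filter.Eventually.of_forall fun h => by simpa [Real.norm_eq_abs] using hAbd (-h)
  -- symmetry
  have hsym : ∫ h in B, A (-h) = ∫ h in B, A h := by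
    have hnegB : (Neg.neg : EuclideanSpace ℝ (Fin d) → EuclideanSpace ℝ (Fin d)) ⁻¹' B = B := by
      ext x; simp [hB_def]
    have := (Measure.measurePreserving_neg (volume : Measure (EuclideanSpace ℝ (Fin d)))).setIntegral_preimage_emb
      (Homeomorph.neg (EuclideanSpace ℝ (Fin d))).measurableEmbedding A B
    rw [hnegB] at this
    exact this
  set q : ℝ := ∫ y, qX y * qY y with hq_def
  set b : ℝ := (volume B).toReal with hb_def
  have hb_pos : 0 < b := by
    rw [hb_def, hB_def]
    exact ENNReal.toReal_pos (Metric.measure_closedBall_pos volume 0 hε).ne' hBfin.ne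
  -- main pointwise estimate
  set C : ℝ := (1 / 2) * K ^ 2 * ε ^ (2 * α) with hC_def
  have hptwise : ∀ h ∈ B, |(A h + A (-h)) / 2 - q| ≤ C := by
    intro h hh
    have hhε : ‖h‖ ≤ ε := by simpa [hB_def, dist_zero_right] using hh
    have hh1 : ‖h‖ ≤ 1 := hhε.trans hε1
    have tX := memL2_translate hqX2 h
    have tY := memL2_translate hqY2 h
    have hkey := key_identity hqX2 hqY2 h
    have hΔX : Real.sqrt (∫ y, (qX (h + y) - qX y) ^ 2) ≤ K * ‖h‖ ^ α := by
      have := hHqX (-h) (by simpa using hh1)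
      have e : (fun x => (qX (x - -h) - qX x) ^ 2) = fun x => (qX (h + x) - qX x) ^ 2 := by
        funext x; rw [sub_neg_eq_add, add_comm]
      rw [e] at this
      simpa using this
    have hΔY : Real.sqrt (∫ y, (qY (h + y) - qY y) ^ 2) ≤ K * ‖h‖ ^ α := by
      have := hHqY (-h) (by simpa using hh1)
      have e : (fun x => (qY (x - -h) - qY x) ^ 2) = fun x => (qY (h + x) - qY x) ^ 2 := by
        funext x; rw [sub_neg_eq_add, add_comm]
      rw [e] at this
      simpa using this
    have hCS : |∫ y, (qX (h + y) - qX y) * (qY (h + y) - qY y)|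
        ≤ (K * ‖h‖ ^ α) * (K * ‖h‖ ^ α) := by
      refine (abs_integral_mul_le_sqrt (tX.sub hqX2) (tY.sub hqY2)).trans ?_
      exact mul_le_mul hΔX hΔY (Real.sqrt_nonneg _) (by positivity)
    have hpow : (K * ‖h‖ ^ α) * (K * ‖h‖ ^ α) ≤ K ^ 2 * ε ^ (2 * α) := by
      have h1 : (K * ‖h‖ ^ α) * (K * ‖h‖ ^ α) = K ^ 2 * ‖h‖ ^ (2 * α) := by
        rw [show (2 : ℝ) * α = α * 2 by ring, Real.rpow_mul (norm_nonneg h),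
          show ((2:ℝ)) = ((2:ℕ):ℝ) by norm_num, Real.rpow_natCast]
        ring
      rw [h1]
      have h2 : ‖h‖ ^ (2 * α) ≤ ε ^ (2 * α) :=
        Real.rpow_le_rpow (norm_nonneg h) hhε (by positivity)
      nlinarith [sq_nonneg K]
    have : (A h + A (-h)) / 2 - q
        = - (∫ y, (qX (h + y) - qX y) * (qY (h + y) - qY y)) / 2 := by
      rw [hA_def, hq_def] at *
      have := hkey
      linarith [hkey]
    rw [this, hC_def]
    rw [abs_div, abs_neg]
    rw [abs_of_nonneg (by norm_num : (0:ℝ) ≤ 2)]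
    calc |∫ y, (qX (h + y) - qX y) * (qY (h + y) - qY y)| / 2
        ≤ ((K * ‖h‖ ^ α) * (K * ‖h‖ ^ α)) / 2 := by linarith [hCS]
      _ ≤ (K ^ 2 * ε ^ (2 * α)) / 2 := by linarith [hpow]
      _ = 1 / 2 * K ^ 2 * ε ^ (2 * α) := by ring
  -- assemble
  have hTq : (∫ h in B, A h) - b * q = ∫ h in B, ((A h + A (-h)) / 2 - q) := by
    have hhalf : IntegrableOn (fun h => (A h + A (-h)) / 2) B volume :=
      (hIntA.add hIntA').div_const 2
    rw [integral_sub hhalf (integrableOn_const (C := q) hBfin.ne)]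
    rw [setIntegral_const, smul_eq_mul, integral_div, integral_add hIntA hIntA', hsym]
    rw [measureReal_def, ← hb_def]
    ring
  have hbound : |(∫ h in B, A h) - b * q| ≤ C * b := by
    rw [hTq]
    have := norm_setIntegral_le_of_norm_le_const hBfin
      (f := fun h => (A h + A (-h)) / 2 - q) (C := C)
      (fun h hh => by simpa [Real.norm_eq_abs] using hptwise h hh)
    simpa [Real.norm_eq_abs, hb_def, measureReal_def] using this
  -- final arithmetic
  have hqpq : ∫ x, pX x * pY x = q := by
    rw [hq_def]
    exact integral_congr_ae (by filter_upwards [heqX, heqY] with x h1 h2; rw [h1, h2])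
  have hvol : (volume (Metric.ball (0 : EuclideanSpace ℝ (Fin d)) ε)).toReal = b := by
    rw [hb_def, hB_def, Measure.addHaar_closedBall_eq_addHaar_ball]
  rw [hqpq, hvol, hPT]
  have hbne : b ≠ 0 := hb_pos.ne'
  have : b⁻¹ * (∫ h in B, A h) - q = b⁻¹ * ((∫ h in B, A h) - b * q) := by
    field_simp
  rw [this, abs_mul, abs_of_nonneg (inv_nonneg.mpr hb_pos.le)]
  calc b⁻¹ * |(∫ h in B, A h) - b * q| ≤ b⁻¹ * (C * b) := by
        exact mul_le_mul_of_nonneg_left hbound (inv_nonneg.mpr hb_pos.le)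
    _ = C := by field_simp
end

section
/- For a random vector X in ℝ^d with density p_X ∈ H₂^(α)(K), the kernel-smoothed approximation q̃_{2,0,ε} := b_ε(d)^{-1} P(|X − X'| ≤ ε), where X' is an independent copy of X, satisfies |q̃_{2,0,ε} − ∫ p_X(x)² dx| ≤ (1/2) K² ε^{2α} for 0 < ε ≤ 1. -/
open MeasureTheory ProbabilityTheory

open Metric Set

section Key
variable {d : ℕ}
local notation "E" => EuclideanSpace ℝ (Fin d)

set_option maxHeartbeats 2000000 in
private lemma bias_key (hd : 1 ≤ d) (α K : ℝ) (hα : 0 < α) (hK : 0 < K)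
    {Ω : Type*} [MeasureSpace Ω] [IsProbabilityMeasure (ℙ : Measure Ω)]
    (X X' : Ω → E) (hX : Measurable X) (hX' : Measurable X')
    (hindep : IndepFun X X' ℙ)
    (p : EuclideanSpace ℝ (Fin d) → ℝ) (hm : Measurable p) (h0 : ∀ x, 0 ≤ p x)
    (hp2 : MemLp p 2 volume)
    (hlawX : Measure.map X ℙ = volume.withDensity (fun x => ENNReal.ofReal (p x)))
    (hlawX' : Measure.map X' ℙ = volume.withDensity (fun x => ENNReal.ofReal (p x)))
    (hHolder : ∀ h : E, ‖h‖ ≤ 1 →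
      Real.sqrt (∫ x, (p (x - h) - p x) ^ 2) ≤ K * ‖h‖ ^ α)
    (ε : ℝ) (hε : 0 < ε) (hε1 : ε ≤ 1) :
    |((volume (Metric.ball (0 : E) ε)).toReal)⁻¹
        * (ℙ {ω | dist (X ω) (X' ω) ≤ ε}).toReal
      - ∫ x, p x ^ 2| ≤ (1 / 2) * K ^ 2 * ε ^ (2 * α) := by
  haveI : Nonempty (Fin d) := Fin.pos_iff_nonempty.mp hd
  set g : E → ENNReal := fun x => ENNReal.ofReal (p x) with hg_def
  have hgm : Measurable g := hm.ennreal_ofReal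
  set μ : Measure E := volume.withDensity g with hμ_def
  set q : ℝ := ∫ x, p x ^ 2 with hq_def
  set J : E → ℝ := fun h => ∫ x, p x * p (x + h) with hJ_def
  set B : Set E := Metric.closedBall (0 : E) ε with hB_def
  set C : ℝ := (1 / 2) * K ^ 2 * ε ^ (2 * α) with hC_def
  -- basic integrability facts
  have hti : ∀ h : E, MemLp (fun x => p (x + h)) 2 volume := fun h =>
    hp2.comp_measurePreserving (measurePreserving_add_right volume h)
  have hsq : Integrable (fun x => p x ^ 2) volume := hp2.integrable_sq
  have hsqh : ∀ h : E, Integrable (fun x => p (x + h) ^ 2) volume := fun h =>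
    (hti h).integrable_sq
  have hmh : ∀ h : E, Measurable (fun x : E => p (x + h)) := fun h =>
    hm.comp (measurable_id.add_const h)
  have hmaj : ∀ h : E, Integrable (fun x : E => (p x ^ 2 + p (x + h) ^ 2) / 2) volume :=
    fun h => (hsq.add (hsqh h)).div_const 2
  have hmulint : ∀ h : E, Integrable (fun x => p x * p (x + h)) volume := by
    intro h
    refine Integrable.mono' (hmaj h) ?_ ?_
    · exact (hm.mul (hmh h)).aestronglyMeasurable
    · refine Filter.Eventually.of_forall fun x => ?_
      have h1 := h0 x; have h2 := h0 (x + h)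
      rw [Real.norm_eq_abs, abs_of_nonneg (mul_nonneg h1 h2)]
      nlinarith [sq_nonneg (p x - p (x + h))]
  have hdiffsq : ∀ h : E, Integrable (fun x => (p (x + h) - p x) ^ 2) volume := fun h =>
    ((hti h).sub hp2).integrable_sq
  have htr : ∀ h : E, ∫ x, p (x + h) ^ 2 = q := fun h =>
    integral_add_right_eq_self (fun x => p x ^ 2) h
  -- J bounds
  have hJ_nonneg : ∀ h : E, 0 ≤ J h := fun h =>
    integral_nonneg fun x => mul_nonneg (h0 x) (h0 (x + h))
  have hJ_le : ∀ h : E, J h ≤ q := by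
    intro h
    have h1 : J h ≤ ∫ x, (p x ^ 2 + p (x + h) ^ 2) / 2 := by
      refine integral_mono (hmulint h) (hmaj h) fun x => ?_
      nlinarith [sq_nonneg (p x - p (x + h))]
    have h2 : ∫ x, (p x ^ 2 + p (x + h) ^ 2) / 2 = q := by
      rw [integral_div, integral_add hsq (hsqh h), htr h, ← hq_def]
      ring
    linarith
  -- key identity : q - J h = (1/2) ∫ (p (x+h) - p x)^2
  have hkey : ∀ h : E, q - J h = (1 / 2) * ∫ x, (p (x + h) - p x) ^ 2 := by
    intro h
    have e1 : ∫ x, (p (x + h) - p x) ^ 2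
        = ∫ x, (p (x + h) ^ 2 + p x ^ 2 - 2 * (p x * p (x + h))) :=
      integral_congr_ae (Filter.Eventually.of_forall fun x => by ring)
    have e2 : ∫ x, (p (x + h) ^ 2 + p x ^ 2 - 2 * (p x * p (x + h)))
        = (∫ x, p (x + h) ^ 2) + (∫ x, p x ^ 2) - 2 * J h := by
      have i1 : Integrable (fun x : E => p (x + h) ^ 2 + p x ^ 2) volume := (hsqh h).add hsq
      have i2 : Integrable (fun x : E => 2 * (p x * p (x + h))) volume :=
        (hmulint h).const_mul 2
      rw [integral_sub i1 i2, integral_add (hsqh h) hsq, integral_const_mul]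
    rw [e1, e2, htr h, ← hq_def]
    ring
  -- Hölder bound
  have hD : ∀ h ∈ B, ∫ x, (p (x + h) - p x) ^ 2 ≤ K ^ 2 * ε ^ (2 * α) := by
    intro h hh
    rw [hB_def, Metric.mem_closedBall, dist_zero_right] at hh
    have h1 : ‖(-h : E)‖ ≤ 1 := by rw [norm_neg]; exact hh.trans hε1
    have h2 := hHolder (-h) h1
    simp only [sub_neg_eq_add, norm_neg] at h2
    have hDnn : 0 ≤ ∫ x, (p (x + h) - p x) ^ 2 := integral_nonneg fun x => sq_nonneg _
    have h3 : ∫ x, (p (x + h) - p x) ^ 2 ≤ (K * ‖h‖ ^ α) ^ 2 := by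
      calc ∫ x, (p (x + h) - p x) ^ 2
          = Real.sqrt (∫ x, (p (x + h) - p x) ^ 2) ^ 2 := (Real.sq_sqrt hDnn).symm
        _ ≤ (K * ‖h‖ ^ α) ^ 2 := by
            exact pow_le_pow_left₀ (Real.sqrt_nonneg _) h2 2
    have h4 : (‖h‖ ^ α) ^ 2 ≤ (ε ^ α) ^ 2 := by
      have := Real.rpow_le_rpow (norm_nonneg h) hh hα.le
      exact pow_le_pow_left₀ (Real.rpow_nonneg (norm_nonneg h) α) this 2
    have h5 : (ε ^ α) ^ 2 = ε ^ (2 * α) := by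
      rw [← Real.rpow_natCast (ε ^ α) 2, ← Real.rpow_mul hε.le]
      norm_num
      ring_nf
    calc ∫ x, (p (x + h) - p x) ^ 2 ≤ (K * ‖h‖ ^ α) ^ 2 := h3
      _ = K ^ 2 * (‖h‖ ^ α) ^ 2 := by ring
      _ ≤ K ^ 2 * (ε ^ α) ^ 2 := by nlinarith [sq_nonneg K]
      _ = K ^ 2 * ε ^ (2 * α) := by rw [h5]
  have hbound : ∀ h ∈ B, |J h - q| ≤ C := by
    intro h hh
    have h1 : q - J h ≤ C := by
      rw [hkey h, hC_def]
      have := hD h hh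
      linarith
    have h2 : 0 ≤ q - J h := by
      rw [hkey h]
      have := integral_nonneg (μ := volume) (f := fun x => (p (x + h) - p x) ^ 2) (fun x => sq_nonneg (p (x + h) - p x))
      linarith
    rw [abs_of_nonpos (by linarith)]
    linarith
  -- measurability and integrability of J on B
  have hJm : StronglyMeasurable J := by
    have hmeas : Measurable (fun z : E × E => p z.2 * p (z.2 + z.1)) :=
      (hm.comp measurable_snd).mul (hm.comp (measurable_snd.add measurable_fst))
    exact hmeas.stronglyMeasurable.integral_prod_right'
  have hBmeas : MeasurableSet B := measurableSet_closedBall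
  have hconstB : ∀ c : ℝ, IntegrableOn (fun _ : E => c) B volume := fun c =>
    integrableOn_const measure_closedBall_lt_top.ne
  have hJint : IntegrableOn J B volume := by
    refine Integrable.mono' (hconstB q) hJm.aestronglyMeasurable.restrict ?_
    refine Filter.Eventually.of_forall fun h => ?_
    rw [Real.norm_eq_abs, abs_of_nonneg (hJ_nonneg h)]
    exact hJ_le h
  -- the probability as an integral
  haveI hμprob : IsProbabilityMeasure μ := hlawX ▸ Measure.isProbabilityMeasure_map hX.aemeasurable
  set A : Set (E × E) := {z : E × E | dist z.1 z.2 ≤ ε} with hA_def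
  have hA : MeasurableSet A :=
    (isClosed_le (continuous_fst.dist continuous_snd) continuous_const).measurableSet
  have hPmap : ℙ {ω | dist (X ω) (X' ω) ≤ ε} = (μ.prod μ) A := by
    have hpair : Measure.map (fun ω => (X ω, X' ω)) ℙ = μ.prod μ := by
      rw [(indepFun_iff_map_prod_eq_prod_map_map hX.aemeasurable
        hX'.aemeasurable).mp hindep, hlawX, hlawX']
    rw [← hpair, Measure.map_apply (hX.prodMk hX') hA]
    rfl
  have hwd : ∀ {F : E → ENNReal}, Measurable F →
      ∫⁻ y, F y ∂μ = ∫⁻ y, g y * F y ∂volume := by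
    intro F hF
    rw [hμ_def, lintegral_withDensity_eq_lintegral_mul volume hgm hF]
    rfl
  have hindm : Measurable (A.indicator (1 : E × E → ENNReal)) :=
    measurable_const.indicator hA
  have hinner_m : ∀ x : E, Measurable (fun y : E => A.indicator (1 : E × E → ENNReal) (x, y)) :=
    fun x => hindm.comp measurable_prodMk_left
  have hgy_ind : Measurable (fun z : E × E => g z.1 * (g z.2 * A.indicator (1 : E × E → ENNReal) z)) :=
    (hgm.comp measurable_fst).mul ((hgm.comp measurable_snd).mul hindm)
  have hindm2 : Measurable (B.indicator (1 : E → ENNReal)) :=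
    measurable_const.indicator hBmeas
  have step1 : (μ.prod μ) A
      = ∫⁻ z, g z.1 * (g z.2 * A.indicator (1 : E × E → ENNReal) z) ∂(volume.prod volume) := by
    have hmid : Measurable fun x : E => ∫⁻ y, g y * A.indicator (1 : E × E → ENNReal) (x, y) ∂volume := by
      refine Measurable.lintegral_prod_right (f := fun x y => g y * A.indicator (1 : E × E → ENNReal) (x, y)) ?_
      exact (hgm.comp measurable_snd).mul hindm
    calc (μ.prod μ) A = ∫⁻ z, A.indicator (1 : E × E → ENNReal) z ∂(μ.prod μ) :=
          (lintegral_indicator_one hA).symm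
      _ = ∫⁻ x, ∫⁻ y, A.indicator (1 : E × E → ENNReal) (x, y) ∂μ ∂μ :=
          lintegral_prod _ hindm.aemeasurable
      _ = ∫⁻ x, ∫⁻ y, g y * A.indicator (1 : E × E → ENNReal) (x, y) ∂volume ∂μ :=
          lintegral_congr fun x => hwd (hinner_m x)
      _ = ∫⁻ x, g x * ∫⁻ y, g y * A.indicator (1 : E × E → ENNReal) (x, y) ∂volume ∂volume :=
          hwd hmid
      _ = ∫⁻ x, ∫⁻ y, g x * (g y * A.indicator (1 : E × E → ENNReal) (x, y)) ∂volume ∂volume :=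
          lintegral_congr fun x => (lintegral_const_mul (g x) (hgm.mul (hinner_m x))).symm
      _ = ∫⁻ z, g z.1 * (g z.2 * A.indicator (1 : E × E → ENNReal) z) ∂(volume.prod volume) :=
          (lintegral_prod _ hgy_ind.aemeasurable).symm
  have hT : MeasurePreserving (fun w : E × E => (w.1, w.1 + w.2))
      ((volume : Measure E).prod volume) ((volume : Measure E).prod volume) :=
    (MeasurePreserving.id volume).skew_product measurable_add
      (Filter.Eventually.of_forall fun x => map_add_left_eq_self volume x)
  have hindeq : ∀ w : E × E, A.indicator (1 : E × E → ENNReal) (w.1, w.1 + w.2)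
      = B.indicator (1 : E → ENNReal) w.2 := by
    intro w
    have hmem : (w.1, w.1 + w.2) ∈ A ↔ w.2 ∈ B := by
      simp [hA_def, hB_def, dist_eq_norm]
    by_cases hh : w.2 ∈ B
    · rw [Set.indicator_of_mem hh, Set.indicator_of_mem (hmem.mpr hh)]
      simp
    · rw [Set.indicator_of_notMem hh, Set.indicator_of_notMem (fun hc => hh (hmem.mp hc))]
  set F : E → ENNReal := fun h => ∫⁻ x, g x * g (x + h) ∂volume with hF_def
  have hΨm : Measurable fun w : E × E => g w.1 * (g (w.1 + w.2) * B.indicator (1 : E → ENNReal) w.2) :=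
    (hgm.comp measurable_fst).mul ((hgm.comp measurable_add).mul (hindm2.comp measurable_snd))
  have step2 : ∫⁻ z, g z.1 * (g z.2 * A.indicator (1 : E × E → ENNReal) z) ∂(volume.prod volume)
      = ∫⁻ h in B, F h ∂volume := by
    calc ∫⁻ z, g z.1 * (g z.2 * A.indicator (1 : E × E → ENNReal) z) ∂(volume.prod volume)
        = ∫⁻ w, g w.1 * (g (w.1 + w.2) * A.indicator (1 : E × E → ENNReal) (w.1, w.1 + w.2))
            ∂(volume.prod volume) := (hT.lintegral_comp hgy_ind).symm
      _ = ∫⁻ w, g w.1 * (g (w.1 + w.2) * B.indicator (1 : E → ENNReal) w.2)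
            ∂(volume.prod volume) := lintegral_congr fun w => by rw [hindeq w]
      _ = ∫⁻ h, ∫⁻ x, g x * (g (x + h) * B.indicator (1 : E → ENNReal) h) ∂volume ∂volume :=
          lintegral_prod_symm _ hΨm.aemeasurable
      _ = ∫⁻ h, B.indicator F h ∂volume := by
          refine lintegral_congr fun h => ?_
          by_cases hh : h ∈ B
          · simp only [Set.indicator_of_mem hh, Pi.one_apply, mul_one, hF_def]
          · simp [Set.indicator_of_notMem hh]
      _ = ∫⁻ h in B, F h ∂volume := lintegral_indicator hBmeas F
  have hF : ∀ h : E, F h = ENNReal.ofReal (J h) := by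
    intro h
    have e : (fun x : E => g x * g (x + h)) = fun x => ENNReal.ofReal (p x * p (x + h)) :=
      funext fun x => (ENNReal.ofReal_mul (h0 x)).symm
    rw [hF_def]
    show ∫⁻ x, g x * g (x + h) ∂volume = _
    rw [e]
    exact (ofReal_integral_eq_lintegral_ofReal (hmulint h)
      (Filter.Eventually.of_forall fun x => mul_nonneg (h0 x) (h0 (x + h)))).symm
  have hSB : ∫⁻ h in B, F h ∂volume = ENNReal.ofReal (∫ h in B, J h) := by
    rw [lintegral_congr fun h => hF h]
    exact (ofReal_integral_eq_lintegral_ofReal hJint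
      (Filter.Eventually.of_forall fun h => hJ_nonneg h)).symm
  have hP : (ℙ {ω | dist (X ω) (X' ω) ≤ ε}).toReal = ∫ h in B, J h := by
    rw [hPmap, step1, step2, hSB,
      ENNReal.toReal_ofReal (setIntegral_nonneg hBmeas fun h _ => hJ_nonneg h)]
  -- final arithmetic
  have hsphere : volume (Metric.ball (0 : E) ε) = volume B := by
    rw [hB_def]
    exact (Measure.addHaar_closedBall_eq_addHaar_ball (μ := (volume : Measure E)) 0 ε).symm
  set b : ℝ := (volume (Metric.ball (0 : E) ε)).toReal with hb_def
  have hbB : (volume B).toReal = b := by rw [hb_def, hsphere]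
  have hb_pos : 0 < b :=
    ENNReal.toReal_pos (measure_ball_pos volume 0 hε).ne' measure_ball_lt_top.ne
  have hsplit : b⁻¹ * (∫ h in B, J h) - q = b⁻¹ * ∫ h in B, (J h - q) := by
    rw [integral_sub hJint (hconstB q), setIntegral_const, measureReal_def, hbB, smul_eq_mul, mul_sub,
      inv_mul_cancel_left₀ hb_pos.ne']
  have hCnn : 0 ≤ C := by
    rw [hC_def]
    positivity
  have habs : |∫ h in B, (J h - q)| ≤ b * C := by
    calc |∫ h in B, (J h - q)| ≤ ∫ h in B, |J h - q| := by
          simpa only [Real.norm_eq_abs] using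
            norm_integral_le_integral_norm (μ := volume.restrict B) (fun h => J h - q)
      _ ≤ ∫ _ in B, C := setIntegral_mono_on (hJint.sub (hconstB q)).abs (hconstB C) hBmeas
            (fun h hh => hbound h hh)
      _ = b * C := by rw [setIntegral_const, measureReal_def, hbB, smul_eq_mul]
  rw [hP, hsplit, abs_mul, abs_of_nonneg (inv_nonneg.2 hb_pos.le)]
  calc b⁻¹ * |∫ h in B, (J h - q)| ≤ b⁻¹ * (b * C) := by
        exact mul_le_mul_of_nonneg_left habs (inv_nonneg.2 hb_pos.le)
    _ = C := inv_mul_cancel_left₀ hb_pos.ne' C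


end Key

/-- For i.i.d. `X, X'` with density `p_X ∈ H₂^(α)(K)`, the approximation
`q̃_{2,0,ε} = b_ε(d)⁻¹ P(|X - X'| ≤ ε)` of `q_{2,0} = ∫ p_X²`
satisfies `|q̃_{2,0,ε} - q_{2,0}| ≤ (1/2) K² ε^(2α)` for `0 < ε ≤ 1`. -/
theorem bias_bound_q20 (d : ℕ) (hd : 1 ≤ d) (α K : ℝ) (hα : 0 < α) (hα1 : α ≤ 1) (hK : 0 < K)
    {Ω : Type*} [MeasureSpace Ω] [IsProbabilityMeasure (ℙ : Measure Ω)]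
    (X X' : Ω → EuclideanSpace ℝ (Fin d)) (hX : Measurable X) (hX' : Measurable X')
    (hindep : IndepFun X X' ℙ)
    (pX : EuclideanSpace ℝ (Fin d) → ℝ)
    (hpX0 : ∀ x, 0 ≤ pX x)
    (hpX2 : MeasureTheory.MemLp pX 2 volume)
    (hlawX : Measure.map X ℙ = volume.withDensity (fun x => ENNReal.ofReal (pX x)))
    (hlawX' : Measure.map X' ℙ = volume.withDensity (fun x => ENNReal.ofReal (pX x)))
    (hHolderX : ∀ h : EuclideanSpace ℝ (Fin d), ‖h‖ ≤ 1 →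
      Real.sqrt (∫ x, (pX (x - h) - pX x) ^ 2) ≤ K * ‖h‖ ^ α)
    (ε : ℝ) (hε : 0 < ε) (hε1 : ε ≤ 1) :
    |((volume (Metric.ball (0 : EuclideanSpace ℝ (Fin d)) ε)).toReal)⁻¹
        * (ℙ {ω | dist (X ω) (X' ω) ≤ ε}).toReal
      - ∫ x, pX x ^ 2| ≤ (1 / 2) * K ^ 2 * ε ^ (2 * α) := by
  classical
  set p' : EuclideanSpace ℝ (Fin d) → ℝ := fun x => max (hpX2.1.mk pX x) 0 with hp'_def
  have hmm : Measurable p' :=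
    (hpX2.1.stronglyMeasurable_mk.measurable).max measurable_const
  have hae : p' =ᵐ[(volume : Measure (EuclideanSpace ℝ (Fin d)))] pX := by
    filter_upwards [hpX2.1.ae_eq_mk] with x hx
    rw [hp'_def]
    simp only
    rw [← hx, max_eq_left (hpX0 x)]
  have h0' : ∀ x, 0 ≤ p' x := fun x => le_max_right _ _
  have hp2' : MemLp p' 2 volume := hpX2.ae_eq hae.symm
  have hwd_eq : (volume.withDensity fun x => ENNReal.ofReal (pX x))
      = volume.withDensity fun x => ENNReal.ofReal (p' x) :=
    withDensity_congr_ae (by filter_upwards [hae] with x hx; rw [hx])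
  have hlawX2 : Measure.map X ℙ = volume.withDensity fun x => ENNReal.ofReal (p' x) := by
    rw [hlawX, hwd_eq]
  have hlawX'2 : Measure.map X' ℙ = volume.withDensity fun x => ENNReal.ofReal (p' x) := by
    rw [hlawX', hwd_eq]
  have hq : ∫ x, p' x ^ 2 = ∫ x, pX x ^ 2 :=
    integral_congr_ae (by filter_upwards [hae] with x hx; rw [hx])
  have hH' : ∀ h : EuclideanSpace ℝ (Fin d), ‖h‖ ≤ 1 →
      Real.sqrt (∫ x, (p' (x - h) - p' x) ^ 2) ≤ K * ‖h‖ ^ α := by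
    intro h hh
    have hqmp := (measurePreserving_add_right
      (volume : Measure (EuclideanSpace ℝ (Fin d))) (-h)).quasiMeasurePreserving
    have htrans0 := hqmp.ae_eq_comp hae
    have htrans : (fun x : EuclideanSpace ℝ (Fin d) => p' (x - h))
        =ᵐ[(volume : Measure (EuclideanSpace ℝ (Fin d)))] fun x => pX (x - h) := by
      have : ∀ x : EuclideanSpace ℝ (Fin d), x + (-h) = x - h := fun x => (sub_eq_add_neg x h).symm
      simpa only [Function.comp_def, this] using htrans0
    have heq : (fun x : EuclideanSpace ℝ (Fin d) => (p' (x - h) - p' x) ^ 2)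
        =ᵐ[(volume : Measure (EuclideanSpace ℝ (Fin d)))] fun x => (pX (x - h) - pX x) ^ 2 := by
      filter_upwards [htrans, hae] with x h1 h2
      rw [h1, h2]
    rw [integral_congr_ae heq]
    exact hHolderX h hh
  have hmain := bias_key hd α K hα hK X X' hX hX' hindep p' hmm h0' hp2' hlawX2 hlawX'2 hH'
    ε hε hε1
  rwa [hq] at hmain
end

section
/- Let X, Y be independent random vectors in ℝ^d with densities p_X, p_Y ∈ L₂(ℝ^d). Then b_ε(d)^{-1} P(|X − Y| ≤ ε) → ∫_{ℝ^d} p_X(x) p_Y(x) dx as ε → 0+. -/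
open MeasureTheory ProbabilityTheory Filter Metric Set ENNReal Topology

variable {d : ℕ}

local notation "E" => EuclideanSpace ℝ (Fin d)

lemma hconj : Real.HolderConjugate 2 2 := Real.HolderConjugate.two_two

lemma nontrivE (hd : 1 ≤ d) : Nontrivial (EuclideanSpace ℝ (Fin d)) :=
  Module.nontrivial_of_finrank_pos (R := ℝ) (by rw [finrank_euclideanSpace, Fintype.card_fin]; omega)

lemma vol_closedBall_eq (hd : 1 ≤ d) {ε : ℝ} (hε : 0 < ε) (x : E) :
    volume (closedBall x ε) = volume (ball (0 : E) ε) := by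
  haveI := nontrivE hd
  rw [Measure.addHaar_closedBall_center, Measure.addHaar_closedBall_eq_addHaar_ball]

lemma ball_vol_ne_zero (hd : 1 ≤ d) {ε : ℝ} (hε : 0 < ε) :
    volume (ball (0 : E) ε) ≠ 0 :=
  (measure_ball_pos volume 0 hε).ne'

lemma ball_vol_ne_top {ε : ℝ} : volume (ball (0 : E) ε) ≠ ∞ :=
  measure_ball_lt_top.ne

/-- Cauchy–Schwarz with constant 1. -/
lemma lintegral_le_sqrt {α : Type*} [MeasurableSpace α] (μ : Measure α) {h : α → ℝ≥0∞}
    (hm : AEMeasurable h μ) :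
    ∫⁻ x, h x ∂μ ≤ (∫⁻ x, h x ^ (2:ℝ) ∂μ) ^ (1/2:ℝ) * (μ Set.univ) ^ (1/2:ℝ) := by
  have := ENNReal.lintegral_mul_le_Lp_mul_Lq μ hconj hm aemeasurable_const (g := fun _ => 1)
  simpa [ENNReal.one_rpow, lintegral_const] using this

lemma measurable_setLIntegral_ball {h : E → ℝ≥0∞} (hm : Measurable h) (ε : ℝ) :
    Measurable fun x : E => ∫⁻ y in closedBall x ε, h y := by
  have hS : MeasurableSet {p : E × E | dist p.2 p.1 ≤ ε} :=
    (isClosed_le (continuous_snd.dist continuous_fst) continuous_const).measurableSet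
  have key := Measurable.lintegral_prod_right' (ν := (volume : Measure (EuclideanSpace ℝ (Fin d))))
    (f := ({p : E × E | dist p.2 p.1 ≤ ε}).indicator (fun p => h p.2))
    ((hm.comp measurable_snd).indicator hS)
  convert key using 2 with x
  have : (fun y => ({p : E × E | dist p.2 p.1 ≤ ε}).indicator (fun p => h p.2) (x, y))
      = (closedBall x ε).indicator h := by
    funext y
    by_cases hy : dist y x ≤ ε
    · simp [Set.indicator, hy, Metric.mem_closedBall]
    · simp [Set.indicator, hy, Metric.mem_closedBall]
  rw [← lintegral_indicator measurableSet_closedBall, ← this]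

lemma tonelli_ball {h : E → ℝ≥0∞} (hm : Measurable h) (ε : ℝ) :
    ∫⁻ x, ∫⁻ y in closedBall x ε, h y ∂volume ∂volume
      = ∫⁻ y, h y * volume (closedBall y ε) ∂volume := by
  have hS : MeasurableSet {p : E × E | dist p.2 p.1 ≤ ε} :=
    (isClosed_le (continuous_snd.dist continuous_fst) continuous_const).measurableSet
  set F : E × E → ℝ≥0∞ := ({p : E × E | dist p.2 p.1 ≤ ε}).indicator (fun p => h p.2) with hF
  have hFm : Measurable F := (hm.comp measurable_snd).indicator hS
  have h1 : ∀ x : E, ∫⁻ y in closedBall x ε, h y ∂volume = ∫⁻ y, F (x, y) ∂volume := by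
    intro x
    have hfy : (fun y => F (x, y)) = (closedBall x ε).indicator h := by
      funext y
      by_cases hy : dist y x ≤ ε <;> simp [hF, Set.indicator, hy, Metric.mem_closedBall]
    rw [← lintegral_indicator measurableSet_closedBall, ← hfy]
  have h2 : ∀ y : E, ∫⁻ x, F (x, y) ∂volume = h y * volume (closedBall y ε) := by
    intro y
    have : (fun x => F (x, y)) = (closedBall y ε).indicator (fun _ => h y) := by
      funext x
      by_cases hx : dist y x ≤ ε
      · simp [hF, Set.indicator, hx, Metric.mem_closedBall, dist_comm y x]
      · simp [hF, Set.indicator, hx, Metric.mem_closedBall, dist_comm y x]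
    rw [this, lintegral_indicator measurableSet_closedBall, setLIntegral_const]
  simp_rw [h1]
  rw [lintegral_lintegral_swap (f := fun x y => F (x, y))
    (by exact hFm.aemeasurable : AEMeasurable (Function.uncurry fun x y => F (x, y)) _)]
  simp_rw [h2]

lemma opbound (hd : 1 ≤ d) {ε : ℝ} (hε : 0 < ε) {f h : E → ℝ≥0∞}
    (hf : Measurable f) (hh : Measurable h) :
    (volume (ball (0 : E) ε))⁻¹ * ∫⁻ x, f x * ∫⁻ y in closedBall x ε, h y ∂volume ∂volume
      ≤ (∫⁻ x, f x ^ (2:ℝ) ∂volume) ^ (1/2:ℝ) * (∫⁻ x, h x ^ (2:ℝ) ∂volume) ^ (1/2:ℝ) := by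
  set b := volume (ball (0 : E) ε) with hb
  have hb0 : b ≠ 0 := ball_vol_ne_zero hd hε
  have hbt : b ≠ ∞ := ball_vol_ne_top
  set T : E → ℝ≥0∞ := fun x => b⁻¹ * ∫⁻ y in closedBall x ε, h y ∂volume with hT
  have hTm : Measurable T := (measurable_setLIntegral_ball hh ε).const_mul _
  -- rewrite LHS as ∫⁻ f * T
  have hLHS : (volume (ball (0 : E) ε))⁻¹ * ∫⁻ x, f x * ∫⁻ y in closedBall x ε, h y ∂volume ∂volume
      = ∫⁻ x, f x * T x ∂volume := by
    rw [← lintegral_const_mul' _ _ (ENNReal.inv_ne_top.2 hb0)]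
    congr 1; funext x; rw [hT]; ring
  rw [hLHS]
  -- Cauchy–Schwarz
  have hCS := ENNReal.lintegral_mul_le_Lp_mul_Lq volume hconj hf.aemeasurable hTm.aemeasurable
  refine le_trans (by exact hCS) (mul_le_mul_right ?_ _)
  -- (∫ T^2)^(1/2) ≤ (∫ h^2)^(1/2)
  have hT2 : ∫⁻ x, T x ^ (2:ℝ) ∂volume ≤ ∫⁻ x, h x ^ (2:ℝ) ∂volume := by
    have hptwise : ∀ x, T x ^ (2:ℝ) ≤ b⁻¹ * ∫⁻ y in closedBall x ε, h y ^ (2:ℝ) ∂volume := by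
      intro x
      have hvol : volume (closedBall x ε) = b := vol_closedBall_eq hd hε x
      have h1 : ∫⁻ y in closedBall x ε, h y ∂volume
          ≤ (∫⁻ y in closedBall x ε, h y ^ (2:ℝ) ∂volume) ^ (1/2:ℝ) * b ^ (1/2:ℝ) := by
        have := lintegral_le_sqrt (volume.restrict (closedBall x ε)) hh.aemeasurable
        rwa [Measure.restrict_apply_univ, hvol] at this
      have h2 : T x ≤ b⁻¹ * ((∫⁻ y in closedBall x ε, h y ^ (2:ℝ) ∂volume) ^ (1/2:ℝ) * b ^ (1/2:ℝ)) :=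
        mul_le_mul_right h1 _
      calc T x ^ (2:ℝ)
          ≤ (b⁻¹ * ((∫⁻ y in closedBall x ε, h y ^ (2:ℝ) ∂volume) ^ (1/2:ℝ) * b ^ (1/2:ℝ))) ^ (2:ℝ) :=
            ENNReal.rpow_le_rpow h2 (by norm_num)
        _ = b⁻¹ ^ (2:ℝ) * ((∫⁻ y in closedBall x ε, h y ^ (2:ℝ) ∂volume) * b) := by
            rw [ENNReal.mul_rpow_of_nonneg _ _ (by norm_num : (0:ℝ) ≤ 2),
              ENNReal.mul_rpow_of_nonneg _ _ (by norm_num : (0:ℝ) ≤ 2),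
              ← ENNReal.rpow_mul, ← ENNReal.rpow_mul]
            norm_num
        _ = b⁻¹ * ∫⁻ y in closedBall x ε, h y ^ (2:ℝ) ∂volume := by
            have hsq : b⁻¹ ^ (2:ℝ) = b⁻¹ * b⁻¹ := by
              rw [show (2:ℝ) = ((2:ℕ):ℝ) by norm_num, ENNReal.rpow_natCast]; ring
            rw [hsq, mul_mul_mul_comm, ENNReal.inv_mul_cancel hb0 hbt, mul_one]
    calc ∫⁻ x, T x ^ (2:ℝ) ∂volume
        ≤ ∫⁻ x, b⁻¹ * ∫⁻ y in closedBall x ε, h y ^ (2:ℝ) ∂volume ∂volume :=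
          lintegral_mono hptwise
      _ = b⁻¹ * ∫⁻ x, ∫⁻ y in closedBall x ε, h y ^ (2:ℝ) ∂volume ∂volume :=
          lintegral_const_mul' _ _ (ENNReal.inv_ne_top.2 hb0)
      _ = b⁻¹ * ∫⁻ y, h y ^ (2:ℝ) * volume (closedBall y ε) ∂volume := by
          rw [tonelli_ball (hh.pow_const _) ε]
      _ = b⁻¹ * ((∫⁻ y, h y ^ (2:ℝ) ∂volume) * b) := by
          congr 1
          simp_rw [fun y => vol_closedBall_eq hd hε y]
          exact lintegral_mul_const' b _ hbt
      _ = ∫⁻ y, h y ^ (2:ℝ) ∂volume := by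
          rw [mul_comm ((∫⁻ y, h y ^ (2:ℝ) ∂volume)) b, ← mul_assoc,
            ENNReal.inv_mul_cancel hb0 hbt, one_mul]
  exact ENNReal.rpow_le_rpow hT2 (by norm_num)

lemma eLpNorm_two_eq {w : E → ℝ} :
    eLpNorm w 2 volume = (∫⁻ x, (ENNReal.ofReal |w x|) ^ (2:ℝ) ∂volume) ^ (1/2:ℝ) := by
  rw [eLpNorm_eq_lintegral_rpow_enorm_toReal (by norm_num) (by norm_num)]
  simp_rw [ENNReal.toReal_ofNat, Real.enorm_eq_ofReal_abs]

lemma eLpNorm_two_eq' {w : E → ℝ} (hw : ∀ x, 0 ≤ w x) :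
    eLpNorm w 2 volume = (∫⁻ x, (ENNReal.ofReal (w x)) ^ (2:ℝ) ∂volume) ^ (1/2:ℝ) := by
  rw [eLpNorm_two_eq]
  congr 1
  simp_rw [fun x => abs_of_nonneg (hw x)]

lemma budget {X β : ℝ≥0∞} (hX : X ≠ ∞) (hβ0 : β ≠ 0) (hβt : β ≠ ∞) :
    ∃ t : ℝ≥0∞, t ≠ 0 ∧ t ≠ ∞ ∧ X * t ≤ β := by
  rcases eq_or_ne X 0 with h | h
  · exact ⟨1, one_ne_zero, ENNReal.one_ne_top, by simp [h]⟩
  · refine ⟨β / X, ?_, ?_, ?_⟩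
    · simp [ENNReal.div_eq_zero_iff, hβ0, hX]
    · exact (ENNReal.div_lt_top hβt h).ne
    · rw [mul_comm, ENNReal.div_mul_cancel h hX]

lemma three_eighths {a : ℝ≥0∞} (h : a ≠ ∞) : a/8 + a/8 + a/8 ≤ a := by
  have h8 : a / 8 ≠ ∞ := (ENNReal.div_lt_top h (by norm_num)).ne
  refine (ENNReal.toReal_le_toReal (by simp [ENNReal.add_ne_top, h8]) h).mp ?_
  rw [ENNReal.toReal_add (by simp [ENNReal.add_ne_top, h8]) h8,
    ENNReal.toReal_add h8 h8, ENNReal.toReal_div]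
  have := ENNReal.toReal_nonneg (a := a)
  norm_num
  linarith

lemma J_mono_add {ε : ℝ} {f w1 w2 w3 : E → ℝ≥0∞} (hf : Measurable f)
    (hw2 : Measurable w2) (hw3 : Measurable w3) (hw : ∀ y, w1 y ≤ w2 y + w3 y) :
    ∫⁻ x, f x * ∫⁻ y in closedBall x ε, w1 y ∂volume ∂volume
      ≤ (∫⁻ x, f x * ∫⁻ y in closedBall x ε, w2 y ∂volume ∂volume)
        + ∫⁻ x, f x * ∫⁻ y in closedBall x ε, w3 y ∂volume ∂volume := by
  have h1 : ∀ x : E, ∫⁻ y in closedBall x ε, w1 y ∂volume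
      ≤ (∫⁻ y in closedBall x ε, w2 y ∂volume) + ∫⁻ y in closedBall x ε, w3 y ∂volume := by
    intro x
    rw [← lintegral_add_left hw2]
    exact lintegral_mono hw
  calc ∫⁻ x, f x * ∫⁻ y in closedBall x ε, w1 y ∂volume ∂volume
      ≤ ∫⁻ x, (f x * ∫⁻ y in closedBall x ε, w2 y ∂volume)
          + f x * ∫⁻ y in closedBall x ε, w3 y ∂volume ∂volume := by
        refine lintegral_mono fun x => ?_
        rw [← mul_add]
        exact mul_le_mul_right (h1 x) _
    _ = _ := lintegral_add_left (hf.mul (measurable_setLIntegral_ball hw2 ε)) _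
lemma tendsto_ennreal (hd : 1 ≤ d) {pX pY : E → ℝ}
    (hmX : Measurable pX) (hmY : Measurable pY)
    (h0X : ∀ x, 0 ≤ pX x) (h0Y : ∀ x, 0 ≤ pY x)
    (h2X : MemLp pX 2 volume) (h2Y : MemLp pY 2 volume) :
    Tendsto (fun ε : ℝ => (volume (ball (0 : E) ε))⁻¹
        * ∫⁻ x, ENNReal.ofReal (pX x)
            * ∫⁻ y in closedBall x ε, ENNReal.ofReal (pY y) ∂volume ∂volume)
      (𝓝[>] (0:ℝ))
      (𝓝 (∫⁻ x, ENNReal.ofReal (pX x) * ENNReal.ofReal (pY x) ∂volume)) := by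
  set f : E → ℝ≥0∞ := fun x => ENNReal.ofReal (pX x) with hf
  set g : E → ℝ≥0∞ := fun x => ENNReal.ofReal (pY x) with hg
  have hfm : Measurable f := hmX.ennreal_ofReal
  have hgm : Measurable g := hmY.ennreal_ofReal
  set A : ℝ≥0∞ := (∫⁻ x, f x ^ (2:ℝ) ∂volume) ^ (1/2:ℝ) with hA
  have hAe : A = eLpNorm pX 2 volume := (eLpNorm_two_eq' h0X).symm
  have hAt : A ≠ ∞ := by rw [hAe]; exact h2X.eLpNorm_lt_top.ne
  set L : ℝ≥0∞ := ∫⁻ x, f x * g x ∂volume with hLdef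
  have hBY : (∫⁻ x, g x ^ (2:ℝ) ∂volume) ^ (1/2:ℝ) ≠ ∞ := by
    rw [← eLpNorm_two_eq' h0Y]; exact h2Y.eLpNorm_lt_top.ne
  have hLt : L ≠ ∞ := by
    have hcs := ENNReal.lintegral_mul_le_Lp_mul_Lq volume hconj hfm.aemeasurable hgm.aemeasurable
    exact ne_top_of_le_ne_top (ENNReal.mul_ne_top hAt hBY) (by exact hcs)
  rw [ENNReal.tendsto_nhds hLt]
  intro δ hδ
  set δ' : ℝ≥0∞ := min δ 1 with hδ'def
  have hδ'0 : δ' ≠ 0 := (lt_min hδ zero_lt_one).ne'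
  have hδ't : δ' ≠ ∞ := ne_top_of_le_ne_top ENNReal.one_ne_top (min_le_right _ _)
  have hδ'δ : δ' ≤ δ := min_le_left _ _
  have h80 : δ' / 8 ≠ 0 := by simp [ENNReal.div_eq_zero_iff, hδ'0]
  have h8t : δ' / 8 ≠ ∞ := (ENNReal.div_lt_top hδ't (by norm_num)).ne
  -- choose η
  obtain ⟨η, hη0, hηt, hηA⟩ := budget hAt h80 h8t
  -- approximation
  obtain ⟨q0, hq0supp, hq0norm, hq0cont, -⟩ :=
    h2Y.exists_hasCompactSupport_eLpNorm_sub_le (by norm_num) hη0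
  set q : E → ℝ := fun x => max (q0 x) 0 with hq
  have hqc : Continuous q := hq0cont.max continuous_const
  have hqs : HasCompactSupport q := by
    apply hq0supp.mono
    intro x hx
    simp only [Function.mem_support] at hx ⊢
    intro h0
    exact hx (by simp [hq, h0])
  have h0q : ∀ x, 0 ≤ q x := fun x => le_max_right _ _
  have hqm : Measurable q := hqc.measurable
  set h : E → ℝ := fun x => |pY x - q x| with hh
  have hhm : Measurable h := (hmY.sub hqm).abs
  set h' : E → ℝ≥0∞ := fun x => ENNReal.ofReal (h x) with hh'
  set q' : E → ℝ≥0∞ := fun x => ENNReal.ofReal (q x) with hq'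
  have hh'm : Measurable h' := hhm.ennreal_ofReal
  have hq'm : Measurable q' := hqm.ennreal_ofReal
  have hBh : (∫⁻ x, h' x ^ (2:ℝ) ∂volume) ^ (1/2:ℝ) ≤ η := by
    have hnorm : eLpNorm (fun x => pY x - q x) 2 volume ≤ η := by
      refine le_trans (eLpNorm_mono fun x => ?_) hq0norm
      simp only [Pi.sub_apply, Real.norm_eq_abs]
      rcases le_total (q0 x) 0 with hc | hc
      · rw [show q x = 0 from max_eq_right hc, sub_zero, abs_of_nonneg (h0Y x)]
        calc pY x ≤ pY x - q0 x := by linarith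
          _ ≤ |pY x - q0 x| := le_abs_self _
      · rw [show q x = q0 x from max_eq_left hc]
    calc (∫⁻ x, h' x ^ (2:ℝ) ∂volume) ^ (1/2:ℝ)
        = eLpNorm (fun x => pY x - q x) 2 volume := (eLpNorm_two_eq (w := fun x => pY x - q x)).symm
      _ ≤ η := hnorm
  have hsplitY : ∀ x, g x ≤ q' x + h' x := by
    intro x
    rw [hg, hq', hh', ← ENNReal.ofReal_add (h0q x) (abs_nonneg _)]
    refine ENNReal.ofReal_le_ofReal ?_
    show pY x ≤ q x + |pY x - q x|
    cases abs_cases (pY x - q x) with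
    | inl hc => linarith [hc.1]
    | inr hc => linarith [hc.1]
  have hsplitq : ∀ x, q' x ≤ g x + h' x := by
    intro x
    rw [hg, hq', hh', ← ENNReal.ofReal_add (h0Y x) (abs_nonneg _)]
    refine ENNReal.ofReal_le_ofReal ?_
    show q x ≤ pY x + |pY x - q x|
    cases abs_cases (pY x - q x) with
    | inl hc => linarith [hc.1]
    | inr hc => linarith [hc.1]
  -- the compact set K
  set K : Set (EuclideanSpace ℝ (Fin d)) := Metric.cthickening 1 (tsupport q) with hK
  have hKc : IsCompact K := hqs.cthickening
  have hKm : MeasurableSet K := isClosed_cthickening.measurableSet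
  set CK : ℝ≥0∞ := ∫⁻ x in K, f x ∂volume with hCKdef
  have hCKt : CK ≠ ∞ := by
    have h1 := lintegral_le_sqrt (volume.restrict K) hfm.aemeasurable
    rw [Measure.restrict_apply_univ] at h1
    have h2 : (∫⁻ x in K, f x ^ (2:ℝ) ∂volume) ^ (1/2:ℝ) ≤ A :=
      ENNReal.rpow_le_rpow (setLIntegral_le_lintegral _ _) (by norm_num)
    have h3 : (volume K) ^ (1/2:ℝ) ≠ ∞ :=
      ENNReal.rpow_ne_top_of_nonneg (by norm_num) hKc.measure_lt_top.ne
    exact ne_top_of_le_ne_top (ENNReal.mul_ne_top hAt h3)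
      (h1.trans (mul_le_mul_left h2 _))
  obtain ⟨θ', hθ'0, hθ't, hθ'CK⟩ := budget hCKt h80 h8t
  set θ : ℝ := min 1 θ'.toReal with hθdef
  have hθpos : 0 < θ := lt_min one_pos (ENNReal.toReal_pos hθ'0 hθ't)
  have hθle : ENNReal.ofReal θ ≤ θ' := by
    refine le_trans (ENNReal.ofReal_le_ofReal (min_le_right _ _)) ?_
    rw [ENNReal.ofReal_toReal hθ't]
  have hθCK : ENNReal.ofReal θ * CK ≤ δ' / 8 := by
    rw [mul_comm]
    exact le_trans (mul_le_mul_right hθle _) hθ'CK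
  -- uniform continuity
  have hUC := hqs.uniformContinuous_of_continuous hqc
  rw [Metric.uniformContinuous_iff] at hUC
  obtain ⟨ε₀, hε₀, hεθ⟩ := hUC θ hθpos
  set m : ℝ := min 1 (ε₀ / 2) with hm
  filter_upwards [Ioc_mem_nhdsGT_of_mem
    (show (0:ℝ) ∈ Set.Ico 0 m from ⟨le_refl 0, lt_min one_pos (by linarith)⟩)] with ε hε
  obtain ⟨hε1, hε2⟩ := hε
  have hεle1 : ε ≤ 1 := hε2.trans (min_le_left _ _)
  have hεε₀ : ε < ε₀ := lt_of_le_of_lt (hε2.trans (min_le_right _ _)) (by linarith)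
  set b : ℝ≥0∞ := volume (ball (0 : E) ε) with hbdef
  have hb0 : b ≠ 0 := ball_vol_ne_zero hd hε1
  have hbt : b ≠ ∞ := ball_vol_ne_top
  have hvol : ∀ x : E, volume (closedBall x ε) = b := vol_closedBall_eq hd hε1
  -- pull the constant inside
  have hpull : ∀ w : E → ℝ≥0∞,
      b⁻¹ * ∫⁻ x, f x * ∫⁻ y in closedBall x ε, w y ∂volume ∂volume
        = ∫⁻ x, f x * (b⁻¹ * ∫⁻ y in closedBall x ε, w y ∂volume) ∂volume := by
    intro w
    rw [← lintegral_const_mul' _ _ (ENNReal.inv_ne_top.2 hb0)]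
    congr 1; funext x; ring
  -- vanishing off K
  have hzero : ∀ x ∉ K, ∫⁻ y in closedBall x ε, q' y ∂volume = 0 := by
    intro x hx
    have hq0' : ∀ᵐ y ∂(volume : Measure (EuclideanSpace ℝ (Fin d))),
        y ∈ closedBall x ε → q' y = (fun _ => (0:ℝ≥0∞)) y := by
      refine ae_of_all _ fun y hy => ?_
      have hqy : q y = 0 := by
        by_contra hne
        exact hx (mem_cthickening_of_dist_le x y 1 _
          (subset_tsupport q (by simp [Function.mem_support, hne]))
          (by rw [dist_comm]; exact le_trans (mem_closedBall.mp hy) hεle1))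
      simp [hq', hqy]
    rw [setLIntegral_congr_fun_ae measurableSet_closedBall hq0']
    simp
  have hqK : ∀ x ∉ K, q x = 0 := fun x hx =>
    image_eq_zero_of_notMem_tsupport fun hmem => hx (self_subset_cthickening _ hmem)
  -- pointwise upper bound
  have hpt_up : ∀ x, b⁻¹ * ∫⁻ y in closedBall x ε, q' y ∂volume
      ≤ q' x + K.indicator (fun _ => ENNReal.ofReal θ) x := by
    intro x
    by_cases hx : x ∈ K
    · rw [Set.indicator_of_mem hx]
      have hbd : ∫⁻ y in closedBall x ε, q' y ∂volume ≤ (q' x + ENNReal.ofReal θ) * b := by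
        calc ∫⁻ y in closedBall x ε, q' y ∂volume
            ≤ ∫⁻ _ in closedBall x ε, (q' x + ENNReal.ofReal θ) ∂volume := by
              refine setLIntegral_mono measurable_const fun y hy => ?_
              have hd1 : dist (q y) (q x) < θ :=
                hεθ (lt_of_le_of_lt (mem_closedBall.mp hy) hεε₀)
              rw [Real.dist_eq] at hd1
              rw [hq', ← ENNReal.ofReal_add (h0q x) hθpos.le]
              exact ENNReal.ofReal_le_ofReal (by cases abs_cases (q y - q x) with
                | inl hc => linarith [hc.1]
                | inr hc => linarith [hc.1])
          _ = (q' x + ENNReal.ofReal θ) * b := by rw [setLIntegral_const, hvol x]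
      calc b⁻¹ * ∫⁻ y in closedBall x ε, q' y ∂volume
          ≤ b⁻¹ * ((q' x + ENNReal.ofReal θ) * b) := mul_le_mul_right hbd _
        _ = q' x + ENNReal.ofReal θ := by
            rw [mul_comm _ b, ← mul_assoc, ENNReal.inv_mul_cancel hb0 hbt, one_mul]
    · rw [hzero x hx, mul_zero]
      exact zero_le
  -- pointwise lower bound
  have hpt_lo : ∀ x, q' x
      ≤ b⁻¹ * ∫⁻ y in closedBall x ε, q' y ∂volume
        + K.indicator (fun _ => ENNReal.ofReal θ) x := by
    intro x
    by_cases hx : x ∈ K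
    · rw [Set.indicator_of_mem hx]
      have hbd : (q' x - ENNReal.ofReal θ) * b ≤ ∫⁻ y in closedBall x ε, q' y ∂volume := by
        calc (q' x - ENNReal.ofReal θ) * b
            = ∫⁻ _ in closedBall x ε, (q' x - ENNReal.ofReal θ) ∂volume := by
              rw [setLIntegral_const, hvol x]
          _ ≤ ∫⁻ y in closedBall x ε, q' y ∂volume := by
              refine setLIntegral_mono hq'm fun y hy => ?_
              have hd1 : dist (q y) (q x) < θ :=
                hεθ (lt_of_le_of_lt (mem_closedBall.mp hy) hεε₀)
              rw [Real.dist_eq] at hd1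
              rw [hq', ← ENNReal.ofReal_sub _ hθpos.le]
              exact ENNReal.ofReal_le_ofReal (by cases abs_cases (q y - q x) with
                | inl hc => linarith [hc.1]
                | inr hc => linarith [hc.1])
      have h2 : q' x - ENNReal.ofReal θ
          ≤ b⁻¹ * ∫⁻ y in closedBall x ε, q' y ∂volume := by
        have h3 := mul_le_mul_right hbd b⁻¹
        rwa [mul_comm (q' x - ENNReal.ofReal θ) b, ← mul_assoc,
          ENNReal.inv_mul_cancel hb0 hbt, one_mul] at h3
      exact tsub_le_iff_right.mp h2
    · have : q' x = 0 := by simp [hq', hqK x hx]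
      rw [this]
      exact zero_le
  -- indicator integral
  have hind : ∫⁻ x, f x * K.indicator (fun _ => ENNReal.ofReal θ) x ∂volume
      = ENNReal.ofReal θ * CK := by
    have heq : ∀ x, f x * K.indicator (fun _ => ENNReal.ofReal θ) x
        = K.indicator (fun x => ENNReal.ofReal θ * f x) x := by
      intro x
      by_cases hx : x ∈ K <;>
        simp [Set.indicator_of_mem, Set.indicator_of_notMem, hx, mul_comm]
    simp_rw [heq]
    rw [lintegral_indicator hKm, hCKdef]
    exact lintegral_const_mul' _ _ ENNReal.ofReal_ne_top
  -- CS bound for f against h'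
  have hfh : ∫⁻ x, f x * h' x ∂volume ≤ δ' / 8 := by
    have hcs := ENNReal.lintegral_mul_le_Lp_mul_Lq volume hconj hfm.aemeasurable hh'm.aemeasurable
    calc ∫⁻ x, f x * h' x ∂volume
        ≤ A * (∫⁻ x, h' x ^ (2:ℝ) ∂volume) ^ (1/2:ℝ) := by exact hcs
      _ ≤ A * η := mul_le_mul_right hBh _
      _ ≤ δ' / 8 := hηA
  -- upper/lower bounds between ∫ f q' and L
  have hfq'_up : ∫⁻ x, f x * q' x ∂volume ≤ L + δ' / 8 := by
    calc ∫⁻ x, f x * q' x ∂volume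
        ≤ ∫⁻ x, (f x * g x + f x * h' x) ∂volume := by
          refine lintegral_mono fun x => ?_
          rw [← mul_add]
          exact mul_le_mul_right (hsplitq x) _
      _ = L + ∫⁻ x, f x * h' x ∂volume := by
          rw [hLdef]; exact lintegral_add_left (hfm.mul hgm) _
      _ ≤ L + δ' / 8 := add_le_add_right hfh _
  have hL_lo : L ≤ (∫⁻ x, f x * q' x ∂volume) + δ' / 8 := by
    calc L ≤ ∫⁻ x, (f x * q' x + f x * h' x) ∂volume := by
          refine lintegral_mono fun x => ?_
          rw [← mul_add]
          exact mul_le_mul_right (hsplitY x) _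
      _ = (∫⁻ x, f x * q' x ∂volume) + ∫⁻ x, f x * h' x ∂volume :=
          lintegral_add_left (hfm.mul hq'm) _
      _ ≤ _ := add_le_add_right hfh _
  -- the averaged h' term
  have hJh : b⁻¹ * ∫⁻ x, f x * ∫⁻ y in closedBall x ε, h' y ∂volume ∂volume ≤ δ' / 8 := by
    refine le_trans (opbound hd hε1 hfm hh'm) ?_
    calc A * (∫⁻ x, h' x ^ (2:ℝ) ∂volume) ^ (1/2:ℝ)
        ≤ A * η := mul_le_mul_right hBh _
      _ ≤ δ' / 8 := hηA
  -- main quantity bounds for q'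
  have hJq'_up : b⁻¹ * ∫⁻ x, f x * ∫⁻ y in closedBall x ε, q' y ∂volume ∂volume
      ≤ (∫⁻ x, f x * q' x ∂volume) + δ' / 8 := by
    rw [hpull q']
    calc ∫⁻ x, f x * (b⁻¹ * ∫⁻ y in closedBall x ε, q' y ∂volume) ∂volume
        ≤ ∫⁻ x, (f x * q' x + f x * K.indicator (fun _ => ENNReal.ofReal θ) x) ∂volume := by
          refine lintegral_mono fun x => ?_
          rw [← mul_add]
          exact mul_le_mul_right (hpt_up x) _
      _ = (∫⁻ x, f x * q' x ∂volume)
            + ∫⁻ x, f x * K.indicator (fun _ => ENNReal.ofReal θ) x ∂volume :=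
          lintegral_add_left (hfm.mul hq'm) _
      _ ≤ (∫⁻ x, f x * q' x ∂volume) + δ' / 8 := by
          rw [hind]
          exact add_le_add_right hθCK _
  have hJq'_lo : ∫⁻ x, f x * q' x ∂volume
      ≤ b⁻¹ * (∫⁻ x, f x * ∫⁻ y in closedBall x ε, q' y ∂volume ∂volume) + δ' / 8 := by
    rw [hpull q']
    calc ∫⁻ x, f x * q' x ∂volume
        ≤ ∫⁻ x, (f x * (b⁻¹ * ∫⁻ y in closedBall x ε, q' y ∂volume)
            + f x * K.indicator (fun _ => ENNReal.ofReal θ) x) ∂volume := by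
          refine lintegral_mono fun x => ?_
          rw [← mul_add]
          exact mul_le_mul_right (hpt_lo x) _
      _ = (∫⁻ x, f x * (b⁻¹ * ∫⁻ y in closedBall x ε, q' y ∂volume) ∂volume)
            + ∫⁻ x, f x * K.indicator (fun _ => ENNReal.ofReal θ) x ∂volume :=
          lintegral_add_left (hfm.mul ((measurable_setLIntegral_ball hq'm ε).const_mul _)) _
      _ ≤ _ := by
          rw [hind]
          exact add_le_add_right hθCK _
  -- splitting of the main quantity
  have hJg_split : ∫⁻ x, f x * ∫⁻ y in closedBall x ε, g y ∂volume ∂volume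
      ≤ (∫⁻ x, f x * ∫⁻ y in closedBall x ε, q' y ∂volume ∂volume)
        + ∫⁻ x, f x * ∫⁻ y in closedBall x ε, h' y ∂volume ∂volume :=
    J_mono_add hfm hq'm hh'm hsplitY
  have hJq'_split : ∫⁻ x, f x * ∫⁻ y in closedBall x ε, q' y ∂volume ∂volume
      ≤ (∫⁻ x, f x * ∫⁻ y in closedBall x ε, g y ∂volume ∂volume)
        + ∫⁻ x, f x * ∫⁻ y in closedBall x ε, h' y ∂volume ∂volume :=
    J_mono_add hfm hgm hh'm hsplitq
  -- assemble
  set F : ℝ≥0∞ := b⁻¹ * ∫⁻ x, f x * ∫⁻ y in closedBall x ε, g y ∂volume ∂volume with hF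
  have hup : F ≤ L + δ := by
    have : F ≤ L + (δ'/8 + δ'/8 + δ'/8) := by
      calc F ≤ b⁻¹ * ((∫⁻ x, f x * ∫⁻ y in closedBall x ε, q' y ∂volume ∂volume)
            + ∫⁻ x, f x * ∫⁻ y in closedBall x ε, h' y ∂volume ∂volume) :=
            mul_le_mul_right hJg_split _
        _ = b⁻¹ * (∫⁻ x, f x * ∫⁻ y in closedBall x ε, q' y ∂volume ∂volume)
            + b⁻¹ * ∫⁻ x, f x * ∫⁻ y in closedBall x ε, h' y ∂volume ∂volume := mul_add _ _ _
        _ ≤ ((∫⁻ x, f x * q' x ∂volume) + δ'/8) + δ'/8 := add_le_add hJq'_up hJh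
        _ ≤ ((L + δ'/8) + δ'/8) + δ'/8 := by gcongr
        _ = L + (δ'/8 + δ'/8 + δ'/8) := by ring
    refine le_trans this (add_le_add_right ?_ _)
    exact le_trans (three_eighths hδ't) hδ'δ
  have hlo : L ≤ F + δ := by
    have : L ≤ F + (δ'/8 + δ'/8 + δ'/8) := by
      calc L ≤ (∫⁻ x, f x * q' x ∂volume) + δ'/8 := hL_lo
        _ ≤ (b⁻¹ * (∫⁻ x, f x * ∫⁻ y in closedBall x ε, q' y ∂volume ∂volume) + δ'/8) + δ'/8 := by
            gcongr
        _ ≤ ((b⁻¹ * ((∫⁻ x, f x * ∫⁻ y in closedBall x ε, g y ∂volume ∂volume)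
              + ∫⁻ x, f x * ∫⁻ y in closedBall x ε, h' y ∂volume ∂volume)) + δ'/8) + δ'/8 := by
            gcongr
        _ = ((F + b⁻¹ * ∫⁻ x, f x * ∫⁻ y in closedBall x ε, h' y ∂volume ∂volume)
              + δ'/8) + δ'/8 := by rw [mul_add]
        _ ≤ ((F + δ'/8) + δ'/8) + δ'/8 := by gcongr
        _ = F + (δ'/8 + δ'/8 + δ'/8) := by ring
    refine le_trans this (add_le_add_right ?_ _)
    exact le_trans (three_eighths hδ't) hδ'δ
  exact ⟨tsub_le_iff_right.mpr hlo, hup⟩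




open MeasureTheory ProbabilityTheory Filter

/-- For independent `X, Y` with densities `p_X, p_Y ∈ L₂(ℝ^d)`,
`b_ε(d)⁻¹ P(|X - Y| ≤ ε) → ∫ p_X p_Y` as `ε → 0+`. -/
theorem eps_coincidence_tendsto (d : ℕ) (hd : 1 ≤ d)
    {Ω : Type*} [MeasureSpace Ω] [IsProbabilityMeasure (ℙ : Measure Ω)]
    (X Y : Ω → EuclideanSpace ℝ (Fin d)) (hX : Measurable X) (hY : Measurable Y)
    (hindep : IndepFun X Y ℙ)
    (pX pY : EuclideanSpace ℝ (Fin d) → ℝ)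
    (hpX0 : ∀ x, 0 ≤ pX x) (hpY0 : ∀ x, 0 ≤ pY x)
    (hpX2 : MeasureTheory.MemLp pX 2 volume) (hpY2 : MeasureTheory.MemLp pY 2 volume)
    (hlawX : Measure.map X ℙ = volume.withDensity (fun x => ENNReal.ofReal (pX x)))
    (hlawY : Measure.map Y ℙ = volume.withDensity (fun x => ENNReal.ofReal (pY x))) :
    Tendsto
      (fun ε : ℝ =>
        ((volume (Metric.ball (0 : EuclideanSpace ℝ (Fin d)) ε)).toReal)⁻¹
          * (ℙ {ω | dist (X ω) (Y ω) ≤ ε}).toReal)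
      (nhdsWithin 0 (Set.Ioi 0)) (nhds (∫ x, pX x * pY x)) := by
  -- measurable nonnegative representatives
  have haX : AEMeasurable pX (volume : Measure (EuclideanSpace ℝ (Fin d))) :=
    hpX2.aestronglyMeasurable.aemeasurable
  have haY : AEMeasurable pY (volume : Measure (EuclideanSpace ℝ (Fin d))) :=
    hpY2.aestronglyMeasurable.aemeasurable
  set pX' : EuclideanSpace ℝ (Fin d) → ℝ := fun x => max (haX.mk pX x) 0 with hpX'def
  set pY' : EuclideanSpace ℝ (Fin d) → ℝ := fun x => max (haY.mk pY x) 0 with hpY'def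
  have hmX' : Measurable pX' := haX.measurable_mk.max measurable_const
  have hmY' : Measurable pY' := haY.measurable_mk.max measurable_const
  have haeX : pX =ᵐ[volume] pX' := by
    filter_upwards [haX.ae_eq_mk] with x hx
    rw [hpX'def]; simp only [← hx]; exact (max_eq_left (hpX0 x)).symm
  have haeY : pY =ᵐ[volume] pY' := by
    filter_upwards [haY.ae_eq_mk] with x hx
    rw [hpY'def]; simp only [← hx]; exact (max_eq_left (hpY0 x)).symm
  have h0X' : ∀ x, 0 ≤ pX' x := fun x => le_max_right _ _
  have h0Y' : ∀ x, 0 ≤ pY' x := fun x => le_max_right _ _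
  have h2X' : MemLp pX' 2 volume := hpX2.ae_eq haeX
  have h2Y' : MemLp pY' 2 volume := hpY2.ae_eq haeY
  have hlawX' : Measure.map X ℙ
      = volume.withDensity (fun x => ENNReal.ofReal (pX' x)) := by
    rw [hlawX]
    exact withDensity_congr_ae (haeX.mono fun x hx => by simp only [hx])
  have hlawY' : Measure.map Y ℙ
      = volume.withDensity (fun x => ENNReal.ofReal (pY' x)) := by
    rw [hlawY]
    exact withDensity_congr_ae (haeY.mono fun x hx => by simp only [hx])
  -- probability identity
  have hP : ∀ ε : ℝ, ℙ {ω | dist (X ω) (Y ω) ≤ ε}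
      = ∫⁻ x, ENNReal.ofReal (pX' x)
          * ∫⁻ y in closedBall x ε, ENNReal.ofReal (pY' y) ∂volume ∂volume := by
    intro ε
    have hSm : MeasurableSet {p : EuclideanSpace ℝ (Fin d) × EuclideanSpace ℝ (Fin d) |
        dist p.1 p.2 ≤ ε} :=
      (isClosed_le (continuous_fst.dist continuous_snd) continuous_const).measurableSet
    have hmap : Measure.map (fun ω => (X ω, Y ω)) ℙ
        = (Measure.map X ℙ).prod (Measure.map Y ℙ) :=
      (indepFun_iff_map_prod_eq_prod_map_map hX.aemeasurable hY.aemeasurable).mp hindep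
    have hset : {ω | dist (X ω) (Y ω) ≤ ε}
        = (fun ω => (X ω, Y ω)) ⁻¹' {p : EuclideanSpace ℝ (Fin d) × EuclideanSpace ℝ (Fin d) |
            dist p.1 p.2 ≤ ε} := rfl
    haveI hprobY : IsProbabilityMeasure
        ((volume : Measure (EuclideanSpace ℝ (Fin d))).withDensity
          fun x => ENNReal.ofReal (pY' x)) :=
      hlawY' ▸ Measure.isProbabilityMeasure_map hY.aemeasurable
    rw [hset, ← Measure.map_apply (hX.prodMk hY) hSm, hmap, hlawX', hlawY',
      Measure.prod_apply hSm]
    have hpre : ∀ x : EuclideanSpace ℝ (Fin d),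
        (Prod.mk x ⁻¹' {p : EuclideanSpace ℝ (Fin d) × EuclideanSpace ℝ (Fin d) |
          dist p.1 p.2 ≤ ε}) = closedBall x ε := by
      intro x; ext y; simp [Metric.mem_closedBall, dist_comm]
    simp_rw [hpre]
    have hwd : (fun x : EuclideanSpace ℝ (Fin d) =>
        ((volume : Measure (EuclideanSpace ℝ (Fin d))).withDensity
          fun y => ENNReal.ofReal (pY' y)) (closedBall x ε))
        = fun x => ∫⁻ y in closedBall x ε, ENNReal.ofReal (pY' y) ∂volume :=
      funext fun x => withDensity_apply _ measurableSet_closedBall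
    rw [hwd, lintegral_withDensity_eq_lintegral_mul _ hmX'.ennreal_ofReal
      (measurable_setLIntegral_ball hmY'.ennreal_ofReal ε)]
    rfl
  -- finiteness of the limit
  have hLt : (∫⁻ x, ENNReal.ofReal (pX' x) * ENNReal.ofReal (pY' x) ∂volume) ≠ ∞ := by
    have hcs := ENNReal.lintegral_mul_le_Lp_mul_Lq
      (volume : Measure (EuclideanSpace ℝ (Fin d))) hconj
      hmX'.ennreal_ofReal.aemeasurable hmY'.ennreal_ofReal.aemeasurable
    refine ne_top_of_le_ne_top (ENNReal.mul_ne_top ?_ ?_) (by exact hcs)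
    · rw [← eLpNorm_two_eq' h0X']; exact h2X'.eLpNorm_lt_top.ne
    · rw [← eLpNorm_two_eq' h0Y']; exact h2Y'.eLpNorm_lt_top.ne
  -- the integral equals the toReal of the lintegral
  have hInt : ∫ x, pX x * pY x
      = (∫⁻ x, ENNReal.ofReal (pX' x) * ENNReal.ofReal (pY' x) ∂volume).toReal := by
    have h1 : ∫ x, pX x * pY x = ∫ x, pX' x * pY' x := integral_congr_ae (haeX.mul haeY)
    rw [h1, integral_eq_lintegral_of_nonneg_ae
      (ae_of_all _ fun x => mul_nonneg (h0X' x) (h0Y' x))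
      ((hmX'.mul hmY').aestronglyMeasurable)]
    congr 1
    exact lintegral_congr fun x => ENNReal.ofReal_mul (h0X' x)
  have hmain := tendsto_ennreal hd hmX' hmY' h0X' h0Y' h2X' h2Y'
  have htoReal := (ENNReal.tendsto_toReal hLt).comp hmain
  rw [hInt]
  refine Tendsto.congr (fun ε => ?_) htoReal
  simp only [Function.comp]
  rw [hP ε, ENNReal.toReal_mul, ENNReal.toReal_inv]
end
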